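/- Let A ∈ Mₙ(ℂ) be self-adjoint with at most m distinct eigenvalues and let B ∈ Mₙ(ℂ). Then there exist commuting matrices A′, B′ ∈ Mₙ(ℂ) with A′ self-adjoint such that ‖A - A′‖ ≤ (m/√2)·‖[A,B]‖^{1/2} and ‖B - B′‖ ≤ (m/√2)·‖[A,B]‖^{1/2}. -/

import Mathlib

/-- The ℓ²→ℓ² operator norm of a square complex matrix. -/
noncomputable def opNorm {n : ℕ} (A : Matrix (Fin n) (Fin n) ℂ) : ℝ :=
  ‖Matrix.toEuclideanCLM (𝕜 := ℂ) A‖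

namespace PS12

open Finset

/-! ### Clustering of a finite set of reals -/

/-- cluster starting points: points of `V` with no point of `V` in `(t-δ, t)`. -/
noncomputable def starts (V : Finset ℝ) (δ : ℝ) : Finset ℝ :=
  V.filter (fun t => ∀ u ∈ V, u ≤ t - δ ∨ t ≤ u)

/-- cluster id of `t`: number of start points `≤ t`. -/
noncomputable def cid (V : Finset ℝ) (δ : ℝ) (t : ℝ) : ℕ :=
  ((starts V δ).filter (fun u => u ≤ t)).card

lemma cid_mono (V : Finset ℝ) (δ : ℝ) {t u : ℝ} (h : t ≤ u) :
    cid V δ t ≤ cid V δ u :=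
  Finset.card_le_card (Finset.monotone_filter_right _ (fun x _ hx => le_trans hx h))

lemma gap_of_cid_ne (V : Finset ℝ) (δ : ℝ) {t u : ℝ} (ht : t ∈ V)
    (htu : t ≤ u) (hne : cid V δ t ≠ cid V δ u) : t + δ ≤ u := by
  have hlt : cid V δ t < cid V δ u := lt_of_le_of_ne (cid_mono V δ htu) hne
  obtain ⟨w, hw, hw2⟩ : ∃ w ∈ (starts V δ).filter (fun v => v ≤ u),
      w ∉ (starts V δ).filter (fun v => v ≤ t) := by
    by_contra h
    push_neg at h
    exact absurd (Finset.card_le_card h) (not_le.2 hlt)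
  rw [mem_filter] at hw
  have hws := hw.1
  rw [mem_filter] at hw2
  push_neg at hw2
  have htw : t < w := by
    by_contra hc
    push_neg at hc
    exact absurd (hw2 hws) (not_lt.2 hc)
  rw [starts, mem_filter] at hws
  rcases hws.2 t ht with h1 | h1
  · linarith [hw.2]
  · linarith

lemma no_start_between (V : Finset ℝ) (δ : ℝ) {t u : ℝ} (htu : t ≤ u)
    (heq : cid V δ t = cid V δ u) {w : ℝ} (hw : w ∈ starts V δ)
    (h1 : t < w) (h2 : w ≤ u) : False := by
  have hsub : (starts V δ).filter (fun v => v ≤ t) ⊆ (starts V δ).filter (fun v => v ≤ u) :=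
    Finset.monotone_filter_right _ (fun x _ hx => le_trans hx htu)
  have hss : (starts V δ).filter (fun v => v ≤ t) ⊂ (starts V δ).filter (fun v => v ≤ u) :=
    (Finset.ssubset_iff_of_subset hsub).2
      ⟨w, mem_filter.2 ⟨hw, h2⟩, fun hc => absurd (mem_filter.1 hc).2 (not_le.2 h1)⟩
  exact absurd heq (Nat.ne_of_lt (Finset.card_lt_card hss))

lemma diam_le (V : Finset ℝ) {δ : ℝ} (hδ : 0 < δ) (u : ℝ) (hu : u ∈ V) :
    ∀ k : ℕ, ∀ t, t ∈ V → t ≤ u →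
      (∀ w ∈ starts V δ, ¬(t < w ∧ w ≤ u)) →
      (V.filter (fun v => t < v ∧ v ≤ u)).card ≤ k → u - t ≤ k * δ := by
  intro k
  induction k with
  | zero =>
    intro t ht htu hns hcard
    have h : ¬ t < u := by
      intro h
      have hmem : u ∈ V.filter (fun v => t < v ∧ v ≤ u) :=
        mem_filter.2 ⟨hu, h, le_refl u⟩
      rw [Finset.card_eq_zero.1 (Nat.le_zero.1 hcard)] at hmem
      exact absurd hmem (Finset.notMem_empty u)
    push_neg at h
    simpa using by linarith
  | succ k ih =>
    intro t ht htu hns hcard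
    by_cases h : t < u
    · have hne : (V.filter (fun v => t < v ∧ v ≤ u)).Nonempty :=
        ⟨u, mem_filter.2 ⟨hu, h, le_refl u⟩⟩
      set F := V.filter (fun v => t < v ∧ v ≤ u) with hF
      set w := F.min' hne with hwdef
      have hwF : w ∈ F := F.min'_mem hne
      have hwV : w ∈ V := (mem_filter.1 hwF).1
      have hw1 : t < w := (mem_filter.1 hwF).2.1
      have hw2 : w ≤ u := (mem_filter.1 hwF).2.2
      have hns' : w ∉ starts V δ := fun hs => hns w hs ⟨hw1, hw2⟩
      obtain ⟨v, hv, hv1, hv2⟩ : ∃ v ∈ V, w - δ < v ∧ v < w := by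
        by_contra hc
        push_neg at hc
        refine hns' (mem_filter.2 ⟨hwV, fun x hx => ?_⟩)
        rcases le_or_gt x (w - δ) with h' | h'
        · exact Or.inl h'
        · exact Or.inr (hc x hx h')
      have hvt : v ≤ t := by
        by_contra hc
        push_neg at hc
        have : v ∈ F := mem_filter.2 ⟨hv, hc, le_of_lt (lt_of_lt_of_le hv2 hw2)⟩
        exact absurd (F.min'_le v this) (not_le.2 hv2)
      have hwt : w - t ≤ δ := by linarith
      have hsub : V.filter (fun v => w < v ∧ v ≤ u) ⊆ F.erase w := by
        intro x hx
        rw [mem_filter] at hx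
        exact Finset.mem_erase.2 ⟨ne_of_gt hx.2.1,
          mem_filter.2 ⟨hx.1, lt_trans hw1 hx.2.1, hx.2.2⟩⟩
      have hcard' : (V.filter (fun v => w < v ∧ v ≤ u)).card ≤ k := by
        have := Finset.card_le_card hsub
        rw [Finset.card_erase_of_mem hwF] at this
        omega
      have ihw := ih w hwV hw2
        (fun x hx hx2 => hns x hx ⟨lt_trans hw1 hx2.1, hx2.2⟩) hcard'
      push_cast
      push_cast at ihw
      linarith
    · push_neg at h
      have : (0:ℝ) ≤ (k+1 : ℕ) * δ := by positivity
      push_cast at this ⊢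
      linarith

/-- the cluster (as a finset) containing `t`. -/
noncomputable def clusterOf (V : Finset ℝ) (δ t : ℝ) : Finset ℝ :=
  V.filter (fun u => cid V δ u = cid V δ t)

/-- the representative (midpoint) of the cluster of `t`. -/
noncomputable def rep (V : Finset ℝ) (δ t : ℝ) : ℝ :=
  if h : (clusterOf V δ t).Nonempty
  then ((clusterOf V δ t).min' h + (clusterOf V δ t).max' h) / 2 else 0

lemma rep_eq_of_cid_eq (V : Finset ℝ) (δ : ℝ) {t u : ℝ}
    (h : cid V δ t = cid V δ u) : rep V δ t = rep V δ u := by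
  have : clusterOf V δ t = clusterOf V δ u := by
    unfold clusterOf; rw [h]
  unfold rep; rw [this]

lemma dist_rep_le (V : Finset ℝ) {δ : ℝ} (hδ : 0 < δ) {t : ℝ} (ht : t ∈ V) :
    |t - rep V δ t| ≤ ((V.card : ℝ) - 1) * δ / 2 := by
  have htC : t ∈ clusterOf V δ t := mem_filter.2 ⟨ht, rfl⟩
  have hne : (clusterOf V δ t).Nonempty := ⟨t, htC⟩
  set a := (clusterOf V δ t).min' hne with ha
  set b := (clusterOf V δ t).max' hne with hb
  have haC : a ∈ clusterOf V δ t := Finset.min'_mem _ hne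
  have hbC : b ∈ clusterOf V δ t := Finset.max'_mem _ hne
  have haV : a ∈ V := (mem_filter.1 haC).1
  have hbV : b ∈ V := (mem_filter.1 hbC).1
  have hat : a ≤ t := Finset.min'_le _ t htC
  have htb : t ≤ b := Finset.le_max' _ t htC
  have hab : a ≤ b := le_trans hat htb
  have hcida : cid V δ a = cid V δ b := by
    rw [(mem_filter.1 haC).2, (mem_filter.1 hbC).2]
  have hns : ∀ w ∈ starts V δ, ¬(a < w ∧ w ≤ b) := by
    intro w hw hc
    exact no_start_between V δ hab hcida hw hc.1 hc.2
  have hVne : V.Nonempty := ⟨t, ht⟩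
  have hcard : (V.filter (fun v => a < v ∧ v ≤ b)).card ≤ V.card - 1 := by
    have hsub : V.filter (fun v => a < v ∧ v ≤ b) ⊆ V.erase a := by
      intro x hx
      rw [mem_filter] at hx
      exact Finset.mem_erase.2 ⟨ne_of_gt hx.2.1, hx.1⟩
    have := Finset.card_le_card hsub
    rw [Finset.card_erase_of_mem haV] at this
    exact this
  have hdiam := diam_le V hδ b hbV (V.card - 1) a haV hab hns hcard
  have hc1 : 1 ≤ V.card := Finset.card_pos.2 hVne
  have hcast : ((V.card - 1 : ℕ) : ℝ) = (V.card : ℝ) - 1 := by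
    push_cast [Nat.cast_sub hc1]; ring
  rw [hcast] at hdiam
  have hrep : rep V δ t = (a + b) / 2 := by
    unfold rep
    rw [dif_pos hne]
  rw [hrep, abs_le]
  constructor <;> nlinarith [hat, htb, hdiam, hδ.le]

lemma gap_of_cid_ne' (V : Finset ℝ) (δ : ℝ) {t u : ℝ} (ht : t ∈ V) (hu : u ∈ V)
    (hne : cid V δ t ≠ cid V δ u) : δ ≤ |t - u| := by
  rcases le_total t u with h | h
  · have := gap_of_cid_ne V δ ht h hne
    rw [abs_sub_comm, abs_of_nonneg (by linarith)]
    linarith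
  · have := gap_of_cid_ne V δ hu h (Ne.symm hne)
    rw [abs_of_nonneg (by linarith)]
    linarith

/-! ### Norm lemmas -/

lemma opNorm_zero {n : ℕ} : opNorm (0 : Matrix (Fin n) (Fin n) ℂ) = 0 := by
  unfold opNorm
  rw [_root_.map_zero, norm_zero]

lemma toCLM_norm_le_one {n : ℕ} (P : Matrix (Fin n) (Fin n) ℂ)
    (h1 : star P * P = 1) : ‖Matrix.toEuclideanCLM (𝕜 := ℂ) P‖ ≤ 1 := by
  set Φ := Matrix.toEuclideanCLM (𝕜 := ℂ) (n := Fin n)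
  have hmul : star (Φ P) * (Φ P) = 1 := by
    rw [← map_star Φ, ← _root_.map_mul Φ, h1, _root_.map_one Φ]
  have hsq : ‖Φ P‖ * ‖Φ P‖ ≤ 1 := by
    rw [← CStarRing.norm_star_mul_self, hmul]
    calc ‖(1 : EuclideanSpace ℂ (Fin n) →L[ℂ] EuclideanSpace ℂ (Fin n))‖
        = ‖ContinuousLinearMap.id ℂ (EuclideanSpace ℂ (Fin n))‖ := by
          rw [ContinuousLinearMap.one_def]
      _ ≤ 1 := ContinuousLinearMap.norm_id_le
  nlinarith [norm_nonneg (Φ P)]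

lemma opNorm_conj_le {n : ℕ} (P M : Matrix (Fin n) (Fin n) ℂ)
    (h1 : star P * P = 1) (h2 : P * star P = 1) :
    opNorm (P * M * star P) ≤ opNorm M := by
  set Φ := Matrix.toEuclideanCLM (𝕜 := ℂ) (n := Fin n)
  have hP : ‖Φ P‖ ≤ 1 := toCLM_norm_le_one P h1
  have hPs : ‖Φ (star P)‖ ≤ 1 := by
    refine toCLM_norm_le_one (star P) ?_
    rw [star_star, h2]
  have hrw : Φ (P * M * star P) = Φ P * Φ M * Φ (star P) := by
    rw [_root_.map_mul Φ, _root_.map_mul Φ]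
  show ‖Φ (P * M * star P)‖ ≤ ‖Φ M‖
  rw [hrw]
  calc ‖Φ P * Φ M * Φ (star P)‖ ≤ ‖Φ P * Φ M‖ * ‖Φ (star P)‖ := norm_mul_le _ _
    _ ≤ ‖Φ P‖ * ‖Φ M‖ * ‖Φ (star P)‖ :=
        mul_le_mul_of_nonneg_right (norm_mul_le _ _) (norm_nonneg _)
    _ ≤ 1 * ‖Φ M‖ * ‖Φ (star P)‖ :=
        mul_le_mul_of_nonneg_right
          (mul_le_mul_of_nonneg_right hP (norm_nonneg _)) (norm_nonneg _)
    _ = ‖Φ M‖ * ‖Φ (star P)‖ := by ring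
    _ ≤ ‖Φ M‖ * 1 := mul_le_mul_of_nonneg_left hPs (norm_nonneg _)
    _ = ‖Φ M‖ := mul_one _

lemma opNorm_unitary_conj {n : ℕ} (P M : Matrix (Fin n) (Fin n) ℂ)
    (h1 : star P * P = 1) (h2 : P * star P = 1) :
    opNorm (P * M * star P) = opNorm M := by
  refine le_antisymm (opNorm_conj_le P M h1 h2) ?_
  have h1' : star (star P) * star P = 1 := by rw [star_star, h2]
  have h2' : star P * star (star P) = 1 := by rw [star_star, h1]
  have := opNorm_conj_le (star P) (P * M * star P) h1' h2'
  have heq : star P * (P * M * star P) * star (star P) = M := by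
    rw [star_star]
    calc star P * (P * M * star P) * P = (star P * P) * M * (star P * P) := by
          noncomm_ring
      _ = M := by rw [h1, one_mul, mul_one]
  rwa [heq] at this

lemma opNorm_diagonal_le {n : ℕ} (d : Fin n → ℂ) {c : ℝ} (hc : 0 ≤ c)
    (h : ∀ i, ‖d i‖ ≤ c) : opNorm (Matrix.diagonal d) ≤ c := by
  refine ContinuousLinearMap.opNorm_le_bound _ hc (fun x => ?_)
  have hcoord : ∀ i, (Matrix.toEuclideanCLM (𝕜 := ℂ) (Matrix.diagonal d) x) i = d i * x i := by
    intro i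
    show ∑ j, Matrix.diagonal d i j * x j = d i * x i
    rw [Finset.sum_eq_single i]
    · rw [Matrix.diagonal_apply_eq]
    · intro j _ hj
      rw [Matrix.diagonal_apply_ne' d hj, zero_mul]
    · intro hi
      exact absurd (Finset.mem_univ i) hi
  rw [EuclideanSpace.norm_eq, EuclideanSpace.norm_eq]
  rw [← Real.sqrt_sq hc, ← Real.sqrt_mul (sq_nonneg c)]
  apply Real.sqrt_le_sqrt
  rw [Finset.mul_sum]
  apply Finset.sum_le_sum
  intro i _
  rw [hcoord i, norm_mul]
  have h1 : ‖d i‖ * ‖x i‖ ≤ c * ‖x i‖ :=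
    mul_le_mul_of_nonneg_right (h i) (norm_nonneg _)
  calc (‖d i‖ * ‖x i‖)^2 ≤ (c * ‖x i‖)^2 := by
        apply sq_le_sq' <;> nlinarith [norm_nonneg (d i), norm_nonneg (x i)]
    _ = c^2 * ‖x i‖^2 := by ring

/-! ### The Schur-type estimate -/

lemma normsq_eucl {n : ℕ} (z : EuclideanSpace ℂ (Fin n)) : ‖z‖^2 = ∑ i, ‖z i‖^2 := by
  rw [EuclideanSpace.norm_eq, Real.sq_sqrt (by positivity)]

lemma sum_swap4 {α β ι κ : Type*} (s : Finset α) (t : Finset β)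
    (u : Finset ι) (v : Finset κ) (F : α → β → ι → κ → ℂ) :
    ∑ i ∈ u, ∑ j ∈ v, ∑ a ∈ s, ∑ b ∈ t, F a b i j
      = ∑ a ∈ s, ∑ b ∈ t, ∑ i ∈ u, ∑ j ∈ v, F a b i j := by
  calc ∑ i ∈ u, ∑ j ∈ v, ∑ a ∈ s, ∑ b ∈ t, F a b i j
      = ∑ i ∈ u, ∑ a ∈ s, ∑ j ∈ v, ∑ b ∈ t, F a b i j :=
        Finset.sum_congr rfl (fun i _ => Finset.sum_comm)
    _ = ∑ a ∈ s, ∑ i ∈ u, ∑ j ∈ v, ∑ b ∈ t, F a b i j := Finset.sum_comm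
    _ = ∑ a ∈ s, ∑ i ∈ u, ∑ b ∈ t, ∑ j ∈ v, F a b i j :=
        Finset.sum_congr rfl (fun a _ => Finset.sum_congr rfl
          (fun i _ => Finset.sum_comm))
    _ = ∑ a ∈ s, ∑ b ∈ t, ∑ i ∈ u, ∑ j ∈ v, F a b i j :=
        Finset.sum_congr rfl (fun a _ => Finset.sum_comm)

lemma opNorm_pairs_le {n : ℕ} (M K : Matrix (Fin n) (Fin n) ℂ)
    (lam : Fin n → ℝ) (V : Finset ℝ) (hV : ∀ i, lam i ∈ V)
    (c : ℝ → ℝ → ℂ)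
    (hM : ∀ i j, M i j = c (lam i) (lam j) * K i j)
    {γ : ℝ} (hγ : 0 ≤ γ) (hc : ∀ a ∈ V, ∀ b ∈ V, ‖c a b‖ ≤ γ)
    {N : ℕ}
    (hrow : ∀ a ∈ V, (V.filter (fun b => c a b ≠ 0)).card ≤ N)
    (hcol : ∀ b ∈ V, (V.filter (fun a => c a b ≠ 0)).card ≤ N) :
    opNorm M ≤ N * γ * opNorm K := by
  classical
  have hopK : (0:ℝ) ≤ opNorm K := norm_nonneg _
  refine ContinuousLinearMap.opNorm_le_bound _ (by positivity) (fun x => ?_)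
  set Φ := Matrix.toEuclideanCLM (𝕜 := ℂ) (n := Fin n) with hΦ
  set y : EuclideanSpace ℂ (Fin n) := Φ M x with hydef
  show ‖y‖ ≤ ↑N * γ * opNorm K * ‖x‖
  have hy : ∀ i, y i = ∑ j, M i j * x j := fun i => rfl
  set e : ℝ → Fin n → ℂ := fun a i => if lam i = a then (1:ℂ) else 0 with he
  have hestar : ∀ a i, (starRingEnd ℂ) (e a i) = e a i := by
    intro a i
    by_cases h : lam i = a <;> simp [he, h]
  have henorm : ∀ a i z, ‖e a i * z‖^2 = if lam i = a then ‖z‖^2 else 0 := by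
    intro a i z
    by_cases h : lam i = a <;> simp [he, h]
  set Pv : ℝ → EuclideanSpace ℂ (Fin n) → EuclideanSpace ℂ (Fin n) :=
    fun a z => (WithLp.equiv 2 _).symm (fun i => e a i * z i) with hPv
  have hPvc : ∀ a z i, Pv a z i = e a i * z i := fun a z i => rfl
  have hPsq : ∀ z : EuclideanSpace ℂ (Fin n), ∑ a ∈ V, ‖Pv a z‖^2 = ‖z‖^2 := by
    intro z
    rw [normsq_eucl z]
    calc ∑ a ∈ V, ‖Pv a z‖^2 = ∑ a ∈ V, ∑ i, if lam i = a then ‖z i‖^2 else 0 := by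
          refine Finset.sum_congr rfl (fun a _ => ?_)
          rw [normsq_eucl]
          exact Finset.sum_congr rfl (fun i _ => by rw [hPvc, henorm])
      _ = ∑ i, ∑ a ∈ V, if lam i = a then ‖z i‖^2 else 0 := Finset.sum_comm
      _ = ∑ i, ‖z i‖^2 := by
          refine Finset.sum_congr rfl (fun i _ => ?_)
          rw [Finset.sum_ite_eq V (lam i) (fun _ => ‖z i‖^2), if_pos (hV i)]
  have epick : ∀ (g : ℝ → ℂ) (i : Fin n), ∑ a ∈ V, e a i * g a = g (lam i) := by
    intro g i
    rw [Finset.sum_eq_single (lam i)]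
    · simp [he]
    · intro b _ hne
      simp [he, hne.symm]
    · intro h
      exact absurd (hV i) h
  set S : ℝ → ℝ → ℂ := fun a b => (inner ℂ (Pv a y) (Φ K (Pv b x)) : ℂ) with hS
  have hSsum : ∀ a b, S a b =
      ∑ i, ∑ j, e a i * (e b j * ((starRingEnd ℂ) (y i) * (K i j * x j))) := by
    intro a b
    rw [hS]
    simp only
    rw [PiLp.inner_apply]
    refine Finset.sum_congr rfl (fun i _ => ?_)
    have hK : (Φ K (Pv b x)) i = ∑ j, K i j * (Pv b x) j := rfl
    rw [RCLike.inner_apply, hK, mul_comm _ ((starRingEnd ℂ) _), Finset.mul_sum]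
    refine Finset.sum_congr rfl (fun j _ => ?_)
    rw [hPvc, hPvc, map_mul, hestar]
    ring
  have hSbound : ∀ a b, ‖S a b‖ ≤ opNorm K * (‖Pv a y‖ * ‖Pv b x‖) := by
    intro a b
    rw [hS]
    calc ‖(inner ℂ (Pv a y) (Φ K (Pv b x)) : ℂ)‖ ≤ ‖Pv a y‖ * ‖Φ K (Pv b x)‖ :=
          norm_inner_le_norm _ _
      _ ≤ ‖Pv a y‖ * (opNorm K * ‖Pv b x‖) :=
          mul_le_mul_of_nonneg_left (ContinuousLinearMap.le_opNorm _ _) (norm_nonneg _)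
      _ = opNorm K * (‖Pv a y‖ * ‖Pv b x‖) := by ring
  have E1 : (inner ℂ y y : ℂ) = ∑ p ∈ V ×ˢ V, c p.1 p.2 * S p.1 p.2 := by
    rw [Finset.sum_product]
    have step2 : ∀ a b, c a b * S a b =
        ∑ i, ∑ j, e a i * (e b j * (c a b * ((starRingEnd ℂ) (y i) * (K i j * x j)))) := by
      intro a b
      rw [hSsum a b, Finset.mul_sum]
      refine Finset.sum_congr rfl (fun i _ => ?_)
      rw [Finset.mul_sum]
      refine Finset.sum_congr rfl (fun j _ => ?_)
      ring
    calc (inner ℂ y y : ℂ) = ∑ i, (starRingEnd ℂ) (y i) * y i := by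
          rw [PiLp.inner_apply]
          exact Finset.sum_congr rfl (fun i _ => by rw [RCLike.inner_apply, mul_comm])
      _ = ∑ i, ∑ j, c (lam i) (lam j) * ((starRingEnd ℂ) (y i) * (K i j * x j)) := by
          refine Finset.sum_congr rfl (fun i _ => ?_)
          rw [hy i, Finset.mul_sum]
          refine Finset.sum_congr rfl (fun j _ => ?_)
          rw [hM i j]
          ring
      _ = ∑ i, ∑ j, ∑ a ∈ V, ∑ b ∈ V,
            e a i * (e b j * (c a b * ((starRingEnd ℂ) (y i) * (K i j * x j)))) := by
          refine Finset.sum_congr rfl (fun i _ => Finset.sum_congr rfl (fun j _ => ?_))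
          symm
          calc ∑ a ∈ V, ∑ b ∈ V,
                e a i * (e b j * (c a b * ((starRingEnd ℂ) (y i) * (K i j * x j))))
              = ∑ a ∈ V, e a i * ∑ b ∈ V,
                  e b j * (c a b * ((starRingEnd ℂ) (y i) * (K i j * x j))) :=
                Finset.sum_congr rfl (fun a _ => (Finset.mul_sum _ _ _).symm)
            _ = ∑ a ∈ V, e a i * (c a (lam j) * ((starRingEnd ℂ) (y i) * (K i j * x j))) :=
                Finset.sum_congr rfl (fun a _ => by
                  rw [epick (fun b => c a b * ((starRingEnd ℂ) (y i) * (K i j * x j))) j])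
            _ = c (lam i) (lam j) * ((starRingEnd ℂ) (y i) * (K i j * x j)) :=
                epick (fun a => c a (lam j) * ((starRingEnd ℂ) (y i) * (K i j * x j))) i
      _ = ∑ a ∈ V, ∑ b ∈ V, ∑ i, ∑ j,
            e a i * (e b j * (c a b * ((starRingEnd ℂ) (y i) * (K i j * x j)))) :=
          sum_swap4 V V Finset.univ Finset.univ _
      _ = ∑ a ∈ V, ∑ b ∈ V, c a b * S a b :=
          Finset.sum_congr rfl (fun a _ => Finset.sum_congr rfl (fun b _ => (step2 a b).symm))
  set P := (V ×ˢ V).filter (fun p => c p.1 p.2 ≠ 0) with hPdef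
  have hyy : ‖y‖^2 = ‖(inner ℂ y y : ℂ)‖ := by
    rw [inner_self_eq_norm_sq_to_K (𝕜 := ℂ), norm_pow, RCLike.norm_ofReal,
      abs_of_nonneg (norm_nonneg _)]
  have hbound1 : ‖(inner ℂ y y : ℂ)‖ ≤
      γ * opNorm K * ∑ p ∈ P, ‖Pv p.1 y‖ * ‖Pv p.2 x‖ := by
    rw [E1]
    calc ‖∑ p ∈ V ×ˢ V, c p.1 p.2 * S p.1 p.2‖
        ≤ ∑ p ∈ V ×ˢ V, ‖c p.1 p.2 * S p.1 p.2‖ := norm_sum_le _ _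
      _ = ∑ p ∈ P, ‖c p.1 p.2 * S p.1 p.2‖ := by
          rw [hPdef]
          refine (Finset.sum_filter_of_ne ?_).symm
          intro p _ hne hc0
          exact hne (by rw [hc0, zero_mul, norm_zero])
      _ ≤ ∑ p ∈ P, γ * opNorm K * (‖Pv p.1 y‖ * ‖Pv p.2 x‖) := by
          refine Finset.sum_le_sum (fun p hp => ?_)
          have hpV := Finset.mem_filter.1 hp
          have h1 := (Finset.mem_product.1 hpV.1).1
          have h2 := (Finset.mem_product.1 hpV.1).2
          rw [norm_mul]
          calc ‖c p.1 p.2‖ * ‖S p.1 p.2‖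
              ≤ γ * (opNorm K * (‖Pv p.1 y‖ * ‖Pv p.2 x‖)) :=
              mul_le_mul (hc p.1 h1 p.2 h2) (hSbound p.1 p.2) (norm_nonneg _) hγ
            _ = γ * opNorm K * (‖Pv p.1 y‖ * ‖Pv p.2 x‖) := by ring
      _ = γ * opNorm K * ∑ p ∈ P, ‖Pv p.1 y‖ * ‖Pv p.2 x‖ := by
          rw [Finset.mul_sum]
  have hCS : ∑ p ∈ P, ‖Pv p.1 y‖ * ‖Pv p.2 x‖ ≤
      Real.sqrt (∑ p ∈ P, ‖Pv p.1 y‖^2) * Real.sqrt (∑ p ∈ P, ‖Pv p.2 x‖^2) := by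
    have h := Finset.sum_mul_sq_le_sq_mul_sq P (fun p => ‖Pv p.1 y‖) (fun p => ‖Pv p.2 x‖)
    have hL : (0:ℝ) ≤ ∑ p ∈ P, ‖Pv p.1 y‖ * ‖Pv p.2 x‖ :=
      Finset.sum_nonneg (fun p _ => mul_nonneg (norm_nonneg _) (norm_nonneg _))
    rw [← Real.sqrt_mul (Finset.sum_nonneg (fun p _ => sq_nonneg _))]
    rw [show ∑ p ∈ P, ‖Pv p.1 y‖ * ‖Pv p.2 x‖
      = Real.sqrt ((∑ p ∈ P, ‖Pv p.1 y‖ * ‖Pv p.2 x‖)^2) from (Real.sqrt_sq hL).symm]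
    exact Real.sqrt_le_sqrt h
  have hrowsum : ∑ p ∈ P, ‖Pv p.1 y‖^2 ≤ N * ‖y‖^2 := by
    calc ∑ p ∈ P, ‖Pv p.1 y‖^2
        = ∑ p ∈ V ×ˢ V, if c p.1 p.2 ≠ 0 then ‖Pv p.1 y‖^2 else 0 := Finset.sum_filter _ _
      _ = ∑ a ∈ V, ∑ b ∈ V, if c a b ≠ 0 then ‖Pv a y‖^2 else 0 := by
          rw [Finset.sum_product]
      _ = ∑ a ∈ V, ((V.filter (fun b => c a b ≠ 0)).card : ℝ) * ‖Pv a y‖^2 := by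
          refine Finset.sum_congr rfl (fun a _ => ?_)
          rw [← Finset.sum_filter, Finset.sum_const, nsmul_eq_mul]
      _ ≤ ∑ a ∈ V, (N : ℝ) * ‖Pv a y‖^2 := by
          refine Finset.sum_le_sum (fun a ha => ?_)
          exact mul_le_mul_of_nonneg_right (Nat.cast_le.2 (hrow a ha)) (sq_nonneg _)
      _ = N * ‖y‖^2 := by rw [← Finset.mul_sum, hPsq]
  have hcolsum : ∑ p ∈ P, ‖Pv p.2 x‖^2 ≤ N * ‖x‖^2 := by
    calc ∑ p ∈ P, ‖Pv p.2 x‖^2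
        = ∑ p ∈ V ×ˢ V, if c p.1 p.2 ≠ 0 then ‖Pv p.2 x‖^2 else 0 := Finset.sum_filter _ _
      _ = ∑ a ∈ V, ∑ b ∈ V, if c a b ≠ 0 then ‖Pv b x‖^2 else 0 := by
          rw [Finset.sum_product]
      _ = ∑ b ∈ V, ∑ a ∈ V, if c a b ≠ 0 then ‖Pv b x‖^2 else 0 := Finset.sum_comm
      _ = ∑ b ∈ V, ((V.filter (fun a => c a b ≠ 0)).card : ℝ) * ‖Pv b x‖^2 := by
          refine Finset.sum_congr rfl (fun b _ => ?_)
          rw [← Finset.sum_filter, Finset.sum_const, nsmul_eq_mul]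
      _ ≤ ∑ b ∈ V, (N : ℝ) * ‖Pv b x‖^2 := by
          refine Finset.sum_le_sum (fun b hb => ?_)
          exact mul_le_mul_of_nonneg_right (Nat.cast_le.2 (hcol b hb)) (sq_nonneg _)
      _ = N * ‖x‖^2 := by rw [← Finset.mul_sum, hPsq]
  have hfinal : ‖y‖^2 ≤ N * γ * opNorm K * ‖x‖ * ‖y‖ := by
    have h1 : Real.sqrt (∑ p ∈ P, ‖Pv p.1 y‖^2) ≤ Real.sqrt ((N : ℝ) * ‖y‖^2) :=
      Real.sqrt_le_sqrt hrowsum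
    have h2 : Real.sqrt (∑ p ∈ P, ‖Pv p.2 x‖^2) ≤ Real.sqrt ((N : ℝ) * ‖x‖^2) :=
      Real.sqrt_le_sqrt hcolsum
    have hsy : Real.sqrt ((N : ℝ) * ‖y‖^2) = Real.sqrt N * ‖y‖ := by
      rw [Real.sqrt_mul (Nat.cast_nonneg N), Real.sqrt_sq (norm_nonneg _)]
    have hsx : Real.sqrt ((N : ℝ) * ‖x‖^2) = Real.sqrt N * ‖x‖ := by
      rw [Real.sqrt_mul (Nat.cast_nonneg N), Real.sqrt_sq (norm_nonneg _)]
    have hsqrtmul : Real.sqrt (N:ℝ) * Real.sqrt (N:ℝ) = (N:ℝ) :=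
      Real.mul_self_sqrt (Nat.cast_nonneg N)
    have hchain : ‖y‖^2 ≤ γ * opNorm K *
        (Real.sqrt ((N : ℝ) * ‖y‖^2) * Real.sqrt ((N : ℝ) * ‖x‖^2)) := by
      calc ‖y‖^2 = ‖(inner ℂ y y : ℂ)‖ := hyy
        _ ≤ γ * opNorm K * ∑ p ∈ P, ‖Pv p.1 y‖ * ‖Pv p.2 x‖ := hbound1
        _ ≤ γ * opNorm K *
            (Real.sqrt (∑ p ∈ P, ‖Pv p.1 y‖^2) * Real.sqrt (∑ p ∈ P, ‖Pv p.2 x‖^2)) :=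
            mul_le_mul_of_nonneg_left hCS (by positivity)
        _ ≤ γ * opNorm K *
            (Real.sqrt ((N : ℝ) * ‖y‖^2) * Real.sqrt ((N : ℝ) * ‖x‖^2)) := by
            refine mul_le_mul_of_nonneg_left ?_ (by positivity)
            exact mul_le_mul h1 h2 (Real.sqrt_nonneg _) (Real.sqrt_nonneg _)
    rw [hsy, hsx] at hchain
    calc ‖y‖^2 ≤ γ * opNorm K * (Real.sqrt N * ‖y‖ * (Real.sqrt N * ‖x‖)) := hchain
      _ = N * γ * opNorm K * ‖x‖ * ‖y‖ := by
          rw [show Real.sqrt (N:ℝ) * ‖y‖ * (Real.sqrt (N:ℝ) * ‖x‖)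
            = (Real.sqrt (N:ℝ) * Real.sqrt (N:ℝ)) * (‖y‖ * ‖x‖) by ring, hsqrtmul]
          ring
  rcases eq_or_lt_of_le (norm_nonneg y) with h0 | h0
  · rw [← h0]
    positivity
  · have := hfinal
    rw [sq] at this
    exact le_of_mul_le_mul_right (by linarith) h0

end PS12

/-- **Nearby commuting matrices when `A` has few eigenvalues.**
If `A ∈ Mₙ(ℂ)` is Hermitian with at most `m` distinct eigenvalues and `B ∈ Mₙ(ℂ)`, then
there are commuting `A', B'` with `A'` Hermitian,
`‖A - A'‖ ≤ (m/√2) ‖[A,B]‖^{1/2}` and `‖B - B'‖ ≤ (m/√2) ‖[A,B]‖^{1/2}`. -/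
theorem stmt_12 {n : ℕ} (m : ℕ) (A B : Matrix (Fin n) (Fin n) ℂ)
    (hA : A.IsHermitian) (hspec : (spectrum ℂ A).ncard ≤ m) :
    ∃ A' B' : Matrix (Fin n) (Fin n) ℂ,
      A'.IsHermitian ∧ A' * B' = B' * A' ∧
      opNorm (A - A') ≤ (m / Real.sqrt 2) * Real.sqrt (opNorm (A * B - B * A)) ∧
      opNorm (B - B') ≤ (m / Real.sqrt 2) * Real.sqrt (opNorm (A * B - B * A)) := by
  classical
  have hRHSnn : 0 ≤ ((m : ℝ) / Real.sqrt 2) * Real.sqrt (opNorm (A * B - B * A)) := by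
    positivity
  by_cases hK0 : opNorm (A * B - B * A) = 0
  · -- trivial case: A and B already commute
    have h1 : Matrix.toEuclideanCLM (𝕜 := ℂ) (A * B - B * A) = 0 := norm_eq_zero.1 hK0
    have h2 : A * B - B * A = 0 := by
      have h3 := congrArg (Matrix.toEuclideanCLM (𝕜 := ℂ) (n := Fin n)).symm h1
      simpa using h3
    have hcomm : A * B = B * A := sub_eq_zero.1 h2
    refine ⟨A, B, hA, hcomm, ?_, ?_⟩ <;>
      rw [sub_self] <;> rw [PS12.opNorm_zero] <;> exact hRHSnn
  · -- main case
    have hKpos : 0 < opNorm (A * B - B * A) :=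
      lt_of_le_of_ne (norm_nonneg _) (Ne.symm hK0)
    set Kmat := A * B - B * A with hKmat
    set δ := Real.sqrt (2 * opNorm Kmat) with hδdef
    have hδ : 0 < δ := Real.sqrt_pos.2 (by linarith)
    set lam := hA.eigenvalues with hlam
    set V : Finset ℝ := Finset.image lam Finset.univ with hVdef
    have hlamV : ∀ i, lam i ∈ V := fun i =>
      Finset.mem_image.2 ⟨i, Finset.mem_univ i, rfl⟩
    set s := V.card with hs
    -- s ≤ m
    have hsm : s ≤ m := by
      have hinj : Function.Injective (algebraMap ℝ ℂ) := (algebraMap ℝ ℂ).injective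
      have himg : (algebraMap ℝ ℂ) '' ↑V ⊆ spectrum ℂ A := by
        rintro z ⟨t, htV, rfl⟩
        obtain ⟨i, _, rfl⟩ := Finset.mem_image.1 htV
        exact spectrum.algebraMap_mem ℂ (hA.eigenvalues_mem_spectrum_real i)
      have h1 : ((algebraMap ℝ ℂ) '' ↑V).ncard = s := by
        rw [Set.ncard_image_of_injective _ hinj, Set.ncard_coe_finset]
      have h2 : ((algebraMap ℝ ℂ) '' ↑V).ncard ≤ (spectrum ℂ A).ncard :=
        Set.ncard_le_ncard himg (Matrix.finite_spectrum A)
      omega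
    -- V nonempty (otherwise n = 0 and Kmat = 0)
    have hVne : V.Nonempty := by
      by_contra hne
      have hempty : IsEmpty (Fin n) := by
        by_contra hne2
        rw [not_isEmpty_iff] at hne2
        exact hne ⟨lam hne2.some, hlamV hne2.some⟩
      have : Kmat = 0 := by
        funext i j
        exact hempty.elim i
      rw [this, PS12.opNorm_zero] at hKpos
      exact lt_irrefl 0 hKpos
    have hs1 : 1 ≤ s := Finset.card_pos.2 hVne
    -- unitary
    set Uc : Matrix (Fin n) (Fin n) ℂ := (hA.eigenvectorUnitary : Matrix (Fin n) (Fin n) ℂ)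
      with hUc
    have hU1 : star Uc * Uc = 1 := Matrix.mem_unitaryGroup_iff'.mp hA.eigenvectorUnitary.2
    have hU2 : Uc * star Uc = 1 := Matrix.mem_unitaryGroup_iff.mp hA.eigenvectorUnitary.2
    have conjmul : ∀ X Y : Matrix (Fin n) (Fin n) ℂ,
        (Uc * X * star Uc) * (Uc * Y * star Uc) = Uc * (X * Y) * star Uc := by
      intro X Y
      have h : (Uc * X * star Uc) * (Uc * Y * star Uc)
          = Uc * X * (star Uc * Uc) * (Y * star Uc) := by noncomm_ring
      rw [h, hU1, mul_one]
      noncomm_ring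
    -- the pieces
    set mu : ℝ → ℝ := PS12.rep V δ with hmu
    set Dd : Matrix (Fin n) (Fin n) ℂ := Matrix.diagonal (RCLike.ofReal ∘ lam) with hDd
    set Dm : Matrix (Fin n) (Fin n) ℂ :=
      Matrix.diagonal (fun i => (RCLike.ofReal (mu (lam i)) : ℂ)) with hDm
    set Bt : Matrix (Fin n) (Fin n) ℂ := star Uc * B * Uc with hBt
    set B't : Matrix (Fin n) (Fin n) ℂ :=
      Matrix.of (fun i j => if PS12.cid V δ (lam i) = PS12.cid V δ (lam j) then Bt i j else 0)
      with hB't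
    refine ⟨Uc * Dm * star Uc, Uc * B't * star Uc, ?_, ?_, ?_, ?_⟩
    · -- Hermitian
      have hDmH : Dm.IsHermitian := by
        rw [hDm, Matrix.isHermitian_diagonal_iff]
        intro i
        exact RCLike.conj_ofReal _
      have := Matrix.isHermitian_mul_mul_conjTranspose Uc hDmH
      rwa [Matrix.star_eq_conjTranspose] at *
    · -- commutation
      have hDB : Dm * B't = B't * Dm := by
        ext i j
        rw [Matrix.diagonal_mul, Matrix.mul_diagonal]
        by_cases h : PS12.cid V δ (lam i) = PS12.cid V δ (lam j)
        · have hmueq : mu (lam i) = mu (lam j) := PS12.rep_eq_of_cid_eq V δ h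
          rw [hmueq]
          ring
        · have : B't i j = 0 := by
            rw [hB't, Matrix.of_apply, if_neg h]
          rw [this, mul_zero, zero_mul]
      rw [conjmul, conjmul, hDB]
    · -- bound on ‖A - A'‖
      have hAeq : A - Uc * Dm * star Uc = Uc * (Dd - Dm) * star Uc := by
        conv_lhs => rw [hA.spectral_theorem, Unitary.conjStarAlgAut_apply]
        rw [← hUc, ← hDd]
        noncomm_ring
      rw [hAeq, PS12.opNorm_unitary_conj Uc _ hU1 hU2]
      rw [hDd, hDm, Matrix.diagonal_sub]
      have hcnn : (0:ℝ) ≤ ((s:ℝ) - 1) * δ / 2 := by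
        have h1s : (1:ℝ) ≤ s := by exact_mod_cast hs1
        have := mul_nonneg (sub_nonneg.2 h1s) hδ.le
        linarith
      refine le_trans (PS12.opNorm_diagonal_le _ hcnn (fun i => ?_)) ?_
      · show ‖(RCLike.ofReal (lam i) : ℂ) - RCLike.ofReal (mu (lam i))‖ ≤ ((s:ℝ) - 1) * δ / 2
        rw [← RCLike.ofReal_sub, RCLike.norm_ofReal]
        exact PS12.dist_rep_le V hδ (hlamV i)
      -- arithmetic
      have h2s : Real.sqrt 2 * Real.sqrt 2 = 2 := Real.mul_self_sqrt (by norm_num)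
      have ha : (0:ℝ) < Real.sqrt 2 := Real.sqrt_pos.2 (by norm_num)
      have hδeq : δ = Real.sqrt 2 * Real.sqrt (opNorm Kmat) := by
        rw [hδdef, Real.sqrt_mul (by norm_num)]
      have hsm' : ((s:ℝ) - 1) ≤ (m:ℝ) := by
        have : (s:ℝ) ≤ (m:ℝ) := by exact_mod_cast hsm
        linarith
      have hkey : ((m:ℝ)) * (Real.sqrt 2 * Real.sqrt (opNorm Kmat)) / 2
          = ((m:ℝ) / Real.sqrt 2) * Real.sqrt (opNorm Kmat) := by
        rw [div_mul_eq_mul_div, div_eq_div_iff (by norm_num : (2:ℝ) ≠ 0) ha.ne']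
        linear_combination ((m:ℝ) * Real.sqrt (opNorm Kmat)) * h2s
      rw [← hkey, hδeq]
      have hb : (0:ℝ) ≤ Real.sqrt 2 * Real.sqrt (opNorm Kmat) := by positivity
      have := mul_le_mul_of_nonneg_right hsm' hb
      linarith
    · -- bound on ‖B - B'‖
      have hBU : Uc * Bt * star Uc = B := by
        rw [hBt]
        have h : Uc * (star Uc * B * Uc) * star Uc
            = (Uc * star Uc) * B * (Uc * star Uc) := by noncomm_ring
        rw [h, hU2, one_mul, mul_one]
      have hBeq : B - Uc * B't * star Uc = Uc * (Bt - B't) * star Uc := by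
        conv_lhs => rw [← hBU]
        noncomm_ring
      rw [hBeq, PS12.opNorm_unitary_conj Uc _ hU1 hU2]
      -- the commutator in the eigenbasis
      set Kt : Matrix (Fin n) (Fin n) ℂ := star Uc * Kmat * Uc with hKt
      have hAU : star Uc * A * Uc = Dd := by
        have h := hA.conjStarAlgAut_star_eigenvectorUnitary
        rwa [Unitary.conjStarAlgAut_apply, Unitary.coe_star, star_star] at h
      have hKtD : Kt = Dd * Bt - Bt * Dd := by
        rw [hKt, hKmat]
        have e1 : star Uc * (A * B) * Uc = (star Uc * A * Uc) * (star Uc * B * Uc) := by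
          have h : (star Uc * A * Uc) * (star Uc * B * Uc)
              = star Uc * A * (Uc * star Uc) * (B * Uc) := by noncomm_ring
          rw [h, hU2, mul_one]
          noncomm_ring
        have e2 : star Uc * (B * A) * Uc = (star Uc * B * Uc) * (star Uc * A * Uc) := by
          have h : (star Uc * B * Uc) * (star Uc * A * Uc)
              = star Uc * B * (Uc * star Uc) * (A * Uc) := by noncomm_ring
          rw [h, hU2, mul_one]
          noncomm_ring
        calc star Uc * (A * B - B * A) * Uc
            = star Uc * (A * B) * Uc - star Uc * (B * A) * Uc := by noncomm_ring
          _ = (star Uc * A * Uc) * (star Uc * B * Uc)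
              - (star Uc * B * Uc) * (star Uc * A * Uc) := by rw [e1, e2]
          _ = Dd * Bt - Bt * Dd := by rw [hAU, hBt]
      have hKtnorm : opNorm Kt = opNorm Kmat := by
        have h1' : star (star Uc) * star Uc = 1 := by rw [star_star, hU2]
        have h2' : star Uc * star (star Uc) = 1 := by rw [star_star, hU1]
        have := PS12.opNorm_unitary_conj (star Uc) Kmat h1' h2'
        rwa [star_star] at this
      have hKtij : ∀ i j, Kt i j =
          ((RCLike.ofReal (lam i) : ℂ) - RCLike.ofReal (lam j)) * Bt i j := by
        intro i j
        rw [hKtD, Matrix.sub_apply, Matrix.diagonal_mul, Matrix.mul_diagonal]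
        simp only [Function.comp_apply]
        ring
      -- the multiplier
      set c : ℝ → ℝ → ℂ := fun a b =>
        if PS12.cid V δ a = PS12.cid V δ b then 0
        else ((RCLike.ofReal a : ℂ) - RCLike.ofReal b)⁻¹ with hcdef
      have hMij : ∀ i j, (Bt - B't) i j = c (lam i) (lam j) * Kt i j := by
        intro i j
        rw [Matrix.sub_apply, hB't, Matrix.of_apply]
        simp only [hcdef]
        by_cases h : PS12.cid V δ (lam i) = PS12.cid V δ (lam j)
        · rw [if_pos h, if_pos h, sub_self, zero_mul]
        · rw [if_neg h, if_neg h, sub_zero, hKtij i j]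
          have hnelam : lam i ≠ lam j := by
            intro heq
            exact h (by rw [heq])
          have hne0 : ((RCLike.ofReal (lam i) : ℂ) - RCLike.ofReal (lam j)) ≠ 0 := by
            rw [sub_ne_zero]
            exact fun hc => hnelam (RCLike.ofReal_injective hc)
          rw [inv_mul_cancel_left₀ hne0]
      have hγ : (0:ℝ) ≤ δ⁻¹ := by positivity
      have hcbd : ∀ a ∈ V, ∀ b ∈ V, ‖c a b‖ ≤ δ⁻¹ := by
        intro a ha b hb
        simp only [hcdef]
        by_cases h : PS12.cid V δ a = PS12.cid V δ b
        · rw [if_pos h, norm_zero]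
          exact hγ
        · rw [if_neg h, norm_inv, ← RCLike.ofReal_sub, RCLike.norm_ofReal]
          have hgap := PS12.gap_of_cid_ne' V δ ha hb h
          exact inv_anti₀ hδ hgap
      have hrow : ∀ a ∈ V, (V.filter (fun b => c a b ≠ 0)).card ≤ s - 1 := by
        intro a ha
        have hsub : V.filter (fun b => c a b ≠ 0) ⊆ V.erase a := by
          intro b hb
          rw [Finset.mem_filter] at hb
          refine Finset.mem_erase.2 ⟨?_, hb.1⟩
          intro heq
          apply hb.2
          rw [hcdef, heq]
          simp
        have := Finset.card_le_card hsub
        rwa [Finset.card_erase_of_mem ha] at this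
      have hcol : ∀ b ∈ V, (V.filter (fun a => c a b ≠ 0)).card ≤ s - 1 := by
        intro b hb
        have hsub : V.filter (fun a => c a b ≠ 0) ⊆ V.erase b := by
          intro a ha
          rw [Finset.mem_filter] at ha
          refine Finset.mem_erase.2 ⟨?_, ha.1⟩
          intro heq
          apply ha.2
          rw [hcdef, heq]
          simp
        have := Finset.card_le_card hsub
        rwa [Finset.card_erase_of_mem hb] at this
      have hmain := PS12.opNorm_pairs_le (Bt - B't) Kt lam V hlamV c hMij hγ hcbd hrow hcol
      rw [hKtnorm] at hmain
      refine le_trans hmain ?_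
      -- arithmetic
      have h2s : Real.sqrt 2 * Real.sqrt 2 = 2 := Real.mul_self_sqrt (by norm_num)
      have ha : (0:ℝ) < Real.sqrt 2 := Real.sqrt_pos.2 (by norm_num)
      have hb : (0:ℝ) < Real.sqrt (opNorm Kmat) := Real.sqrt_pos.2 hKpos
      have hKs : Real.sqrt (opNorm Kmat) * Real.sqrt (opNorm Kmat) = opNorm Kmat :=
        Real.mul_self_sqrt hKpos.le
      have hδeq : δ = Real.sqrt 2 * Real.sqrt (opNorm Kmat) := by
        rw [hδdef, Real.sqrt_mul (by norm_num)]
      have hδ0 : δ ≠ 0 := hδ.ne'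
      have hexp : δ⁻¹ * opNorm Kmat = Real.sqrt (opNorm Kmat) / Real.sqrt 2 := by
        rw [inv_mul_eq_div, div_eq_div_iff hδ0 ha.ne', hδeq]
        linear_combination (-Real.sqrt 2) * hKs
      have hcast : ((s - 1 : ℕ) : ℝ) ≤ (m : ℝ) :=
        Nat.cast_le.2 (le_trans (Nat.sub_le s 1) hsm)
      calc ((s - 1 : ℕ) : ℝ) * δ⁻¹ * opNorm Kmat
          = ((s - 1 : ℕ) : ℝ) * (Real.sqrt (opNorm Kmat) / Real.sqrt 2) := by
            rw [mul_assoc, hexp]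
        _ ≤ (m : ℝ) * (Real.sqrt (opNorm Kmat) / Real.sqrt 2) :=
            mul_le_mul_of_nonneg_right hcast (by positivity)
        _ = ((m : ℝ) / Real.sqrt 2) * Real.sqrt (opNorm Kmat) := by ring
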